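/- Let N be a positive integer, κ = diag(κ₁,…,κ_N) a real diagonal matrix with strictly positive entries, and C, D real N×N matrices. Define σ(r) = κ^{−1/2}(e^{κr}C + e^{−κr}D). Then for every r, the self-Wronskian W[σ,σ](r) := σ(r)ᵀσ'(r) − σ'(r)ᵀσ(r) equals the constant matrix 2(DᵀC − CᵀD). In particular, W[σ,σ] vanishes identically if and only if DᵀC = CᵀD. -/

import Mathlib

open Matrix

/-- Paper's equation (29): the self-Wronskian of the factorization solution
`σ(r) = κ^{-1/2}(e^{κr}C + e^{-κr}D)` is the constant matrix `2(DᵀC - CᵀD)`;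
in particular it vanishes identically iff `DᵀC = CᵀD`. -/
theorem self_wronskian_of_exponential_solution
    (N : ℕ) (hN : 0 < N)
    (κ : Fin N → ℝ) (hκ : ∀ i, 0 < κ i)
    (C D : Matrix (Fin N) (Fin N) ℝ) :
    let σ : ℝ → Matrix (Fin N) (Fin N) ℝ := fun r =>
      diagonal (fun i => (Real.sqrt (κ i))⁻¹) *
        (diagonal (fun i => Real.exp (κ i * r)) * C +
          diagonal (fun i => Real.exp (-(κ i) * r)) * D)
    let σd : ℝ → Matrix (Fin N) (Fin N) ℝ := fun r =>
      Matrix.of fun i j => deriv (fun s => σ s i j) r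
    (∀ r : ℝ, (σ r)ᵀ * σd r - (σd r)ᵀ * σ r = (2 : ℝ) • (Dᵀ * C - Cᵀ * D)) ∧
    ((∀ r : ℝ, (σ r)ᵀ * σd r - (σd r)ᵀ * σ r = 0) ↔ Dᵀ * C = Cᵀ * D) := by
  intro σ σd
  have hσ : ∀ (r : ℝ) (i j : Fin N), σ r i j =
      (Real.sqrt (κ i))⁻¹ *
        (Real.exp (κ i * r) * C i j + Real.exp (-(κ i) * r) * D i j) := by
    intro r i j
    simp [σ, Matrix.mul_apply, Matrix.diagonal_apply, Finset.mul_sum, mul_add,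
      Matrix.add_apply]
  have hσd : ∀ (r : ℝ) (i j : Fin N), σd r i j =
      (Real.sqrt (κ i))⁻¹ *
        (κ i * Real.exp (κ i * r) * C i j - κ i * Real.exp (-(κ i) * r) * D i j) := by
    intro r i j
    have h1 : HasDerivAt (fun s : ℝ => Real.exp (κ i * s)) (κ i * Real.exp (κ i * r)) r := by
      simpa [mul_comm] using ((hasDerivAt_id r).const_mul (κ i)).exp
    have h2 : HasDerivAt (fun s : ℝ => Real.exp (-(κ i) * s))
        (-(κ i) * Real.exp (-(κ i) * r)) r := by
      simpa [mul_comm] using ((hasDerivAt_id r).const_mul (-(κ i))).exp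
    have h : HasDerivAt (fun s : ℝ => (Real.sqrt (κ i))⁻¹ *
        (Real.exp (κ i * s) * C i j + Real.exp (-(κ i) * s) * D i j))
        ((Real.sqrt (κ i))⁻¹ *
          (κ i * Real.exp (κ i * r) * C i j - κ i * Real.exp (-(κ i) * r) * D i j)) r := by
      have h3 := (((h1.mul_const (C i j)).add (h2.mul_const (D i j))).const_mul
        ((Real.sqrt (κ i))⁻¹))
      refine h3.congr_deriv ?_
      ring
    have heq : (fun s => σ s i j) = fun s : ℝ => (Real.sqrt (κ i))⁻¹ *
        (Real.exp (κ i * s) * C i j + Real.exp (-(κ i) * s) * D i j) :=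
      funext fun s => hσ s i j
    show deriv (fun s => σ s i j) r = _
    rw [heq, h.deriv]
  have key : ∀ r : ℝ, (σ r)ᵀ * σd r - (σd r)ᵀ * σ r = (2 : ℝ) • (Dᵀ * C - Cᵀ * D) := by
    intro r
    ext i j
    simp only [Matrix.sub_apply, Matrix.mul_apply, Matrix.smul_apply, Matrix.transpose_apply,
      smul_eq_mul]
    rw [← Finset.sum_sub_distrib, ← Finset.sum_sub_distrib, Finset.mul_sum]
    refine Finset.sum_congr rfl fun k _ => ?_
    rw [hσ, hσ, hσd, hσd]
    have hs : Real.sqrt (κ k) ≠ 0 := ne_of_gt (Real.sqrt_pos.mpr (hκ k))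
    have hu : (Real.sqrt (κ k))⁻¹ * (Real.sqrt (κ k))⁻¹ * κ k = 1 := by
      rw [← mul_inv, ← sq, Real.sq_sqrt (hκ k).le, inv_mul_cancel₀ (hκ k).ne']
    have hab : Real.exp (κ k * r) * Real.exp (-(κ k) * r) = 1 := by
      rw [← Real.exp_add, neg_mul, add_neg_cancel, Real.exp_zero]
    linear_combination
      (2 * (D k i * C k j - C k i * D k j) * Real.exp (κ k * r) * Real.exp (-(κ k) * r)) * hu +
      (2 * (D k i * C k j - C k i * D k j)) * hab
  refine ⟨key, ?_, fun h r => by rw [key, h, sub_self, smul_zero]⟩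
  intro h
  have h0 := (key 0).symm.trans (h 0)
  have := smul_eq_zero.mp h0
  rcases this with h2 | h2
  · norm_num at h2
  · exact sub_eq_zero.mp h2
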